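/- (Uncovered Set consistency) Let P be a probabilistic tournament on n agents satisfying the margin assumption with margin δ > 0, and let T be its hard majority tournament. Then for every agent a the limit lim_{τ→0⁺} u_τ(a) exists; it equals 1 if a belongs to the Uncovered Set UC(T), and it is at most 0 if a does not belong to UC(T). Consequently, for all sufficiently small τ > 0, u_τ(a) > 1/2 if and only if a ∈ UC(T). -/

import Mathlib

open Filter Topology

/-- The logistic sigmoid. -/
noncomputable def sigmoid (z : ℝ) : ℝ := 1 / (1 + Real.exp (-z))

/-- Soft majority edge matrix `D_τ`. -/
noncomputable def softEdge {n : ℕ} (P : Matrix (Fin n) (Fin n) ℝ) (τ : ℝ) :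
    Matrix (Fin n) (Fin n) ℝ := fun a b => sigmoid ((P a b - 1/2) / τ)

/-- 0/1 adjacency matrix of the hard majority tournament. -/
noncomputable def hardAdj {n : ℕ} (P : Matrix (Fin n) (Fin n) ℝ) : Matrix (Fin n) (Fin n) ℝ :=
  fun a b => if 1/2 < P a b then 1 else 0

/-- Soft reachability matrix `R_τ = Σ_{k=1}^K D_τ^k`. -/
noncomputable def softReach {n : ℕ} (P : Matrix (Fin n) (Fin n) ℝ) (τ : ℝ) (K : ℕ) :
    Matrix (Fin n) (Fin n) ℝ := ∑ k ∈ Finset.Icc 1 K, softEdge P τ ^ k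

/-- softmin over a finite family. -/
noncomputable def softmin {ι : Type*} (τ : ℝ) (s : Finset ι) (f : ι → ℝ) : ℝ :=
  -τ * Real.log (∑ i ∈ s, Real.exp (-(f i) / τ))

/-- scalar soft maximum over a finite family. -/
noncomputable def smax {ι : Type*} (τ : ℝ) (s : Finset ι) (f : ι → ℝ) : ℝ :=
  τ * Real.log (∑ i ∈ s, Real.exp (f i / τ))

/-- Soft Top-Cycle membership score `t_τ(a)`. -/
noncomputable def tcScore {n : ℕ} (P : Matrix (Fin n) (Fin n) ℝ) (τ : ℝ) (K : ℕ) (a : Fin n) : ℝ :=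
  softmin τ ({a}ᶜ : Finset (Fin n)) (fun b => softReach P τ K a b)

/-- Soft cover score `cover_τ(c, a)`. -/
noncomputable def coverScore {n : ℕ} (P : Matrix (Fin n) (Fin n) ℝ) (τ : ℝ) (c a : Fin n) : ℝ :=
  softEdge P τ c a *
    (1 - smax τ (Finset.univ : Finset (Fin n)) (fun b => softEdge P τ a b - softEdge P τ c b))

/-- Soft Uncovered-Set membership score `u_τ(a)`. -/
noncomputable def ucScore {n : ℕ} (P : Matrix (Fin n) (Fin n) ℝ) (τ : ℝ) (a : Fin n) : ℝ :=
  1 - smax τ ({a}ᶜ : Finset (Fin n)) (fun c => coverScore P τ c a)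

/-- `a ≻ b` in the hard majority tournament. -/
def beats {n : ℕ} (P : Matrix (Fin n) (Fin n) ℝ) (a b : Fin n) : Prop := 1/2 < P a b

/-- `a` reaches `b` via a directed path in the hard majority tournament. -/
def reaches {n : ℕ} (P : Matrix (Fin n) (Fin n) ℝ) : Fin n → Fin n → Prop :=
  Relation.TransGen (beats P)

/-- `c` covers `a` in the hard majority tournament. -/
def covers {n : ℕ} (P : Matrix (Fin n) (Fin n) ℝ) (c a : Fin n) : Prop :=
  beats P c a ∧ ∀ b, beats P a b → beats P c b

/-- membership in the Top Cycle of the hard majority tournament. -/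
def inTopCycle {n : ℕ} (P : Matrix (Fin n) (Fin n) ℝ) (a : Fin n) : Prop :=
  ∀ b, b ≠ a → reaches P a b

/-- membership in the Uncovered Set of the hard majority tournament. -/
def inUncovered {n : ℕ} (P : Matrix (Fin n) (Fin n) ℝ) (a : Fin n) : Prop :=
  ∀ c, c ≠ a → ¬ covers P c a

/-- `P` is a probabilistic tournament. -/
def IsProbTournament {n : ℕ} (P : Matrix (Fin n) (Fin n) ℝ) : Prop :=
  (∀ a b, 0 ≤ P a b ∧ P a b ≤ 1) ∧ (∀ a b, P a b + P b a = 1) ∧ ∀ a, P a a = 1/2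

/-- margin assumption with margin `δ`. -/
def HasMargin {n : ℕ} (P : Matrix (Fin n) (Fin n) ℝ) (δ : ℝ) : Prop :=
  ∀ a b, a ≠ b → δ ≤ |P a b - 1/2|


section Aux

open Finset Real

variable {ι : Type*}

lemma le_smax {τ : ℝ} (hτ : 0 < τ) {s : Finset ι} (f : ι → ℝ) {i : ι} (hi : i ∈ s) :
    f i ≤ smax τ s f := by
  have hsum : Real.exp (f i / τ) ≤ ∑ j ∈ s, Real.exp (f j / τ) :=
    Finset.single_le_sum (f := fun j => Real.exp (f j / τ)) (fun j _ => (Real.exp_pos _).le) hi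
  have hlog := Real.log_le_log (Real.exp_pos _) hsum
  rw [Real.log_exp] at hlog
  unfold smax
  calc f i = τ * (f i / τ) := by field_simp
    _ ≤ τ * Real.log (∑ j ∈ s, Real.exp (f j / τ)) := by
        exact mul_le_mul_of_nonneg_left hlog hτ.le

lemma smax_le_sup'_add {τ : ℝ} (hτ : 0 < τ) {s : Finset ι} (hs : s.Nonempty) (f : ι → ℝ) :
    smax τ s f ≤ s.sup' hs f + τ * Real.log s.card := by
  have h1 : ∑ j ∈ s, Real.exp (f j / τ) ≤ (s.card : ℝ) * Real.exp (s.sup' hs f / τ) := by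
    calc ∑ j ∈ s, Real.exp (f j / τ)
        ≤ ∑ _j ∈ s, Real.exp (s.sup' hs f / τ) := by
          refine Finset.sum_le_sum fun j hj => Real.exp_le_exp.mpr ?_
          exact div_le_div_of_nonneg_right (Finset.le_sup' f hj) hτ.le
      _ = (s.card : ℝ) * Real.exp (s.sup' hs f / τ) := by
          rw [Finset.sum_const, nsmul_eq_mul]
  have hpos : (0:ℝ) < ∑ j ∈ s, Real.exp (f j / τ) :=
    Finset.sum_pos (fun j _ => Real.exp_pos _) hs
  have h2 := Real.log_le_log hpos h1
  have hcardpos : (0:ℝ) < (s.card : ℝ) := by exact_mod_cast hs.card_pos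
  rw [Real.log_mul hcardpos.ne' (Real.exp_pos _).ne', Real.log_exp] at h2
  unfold smax
  have := mul_le_mul_of_nonneg_left h2 hτ.le
  rw [mul_add, mul_div_cancel₀ _ hτ.ne'] at this
  linarith

lemma tendsto_smax {s : Finset ι} (hs : s.Nonempty) {g : ℝ → ι → ℝ} {L : ι → ℝ}
    (hg : ∀ i ∈ s, Filter.Tendsto (fun τ => g τ i) (nhdsWithin 0 (Set.Ioi 0)) (nhds (L i))) :
    Filter.Tendsto (fun τ => smax τ s (g τ)) (nhdsWithin 0 (Set.Ioi 0)) (nhds (s.sup' hs L)) := by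
  have hsup : Filter.Tendsto (fun τ => s.sup' hs (g τ)) (nhdsWithin 0 (Set.Ioi 0))
      (nhds (s.sup' hs L)) := Filter.Tendsto.finset_sup'_nhds_apply hs hg
  have hzero : Filter.Tendsto (fun τ : ℝ => τ * Real.log s.card) (nhdsWithin 0 (Set.Ioi 0))
      (nhds 0) := by
    have h := (continuous_id.mul (continuous_const (y := Real.log s.card))).tendsto (0:ℝ)
    simpa [Pi.mul_def] using h.mono_left nhdsWithin_le_nhds
  have hupper : Filter.Tendsto (fun τ => s.sup' hs (g τ) + τ * Real.log s.card)
      (nhdsWithin 0 (Set.Ioi 0)) (nhds (s.sup' hs L)) := by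
    simpa using hsup.add hzero
  refine tendsto_of_tendsto_of_tendsto_of_le_of_le' hsup hupper ?_ ?_
  · filter_upwards [self_mem_nhdsWithin] with τ hτ
    exact Finset.sup'_le hs _ fun i hi => le_smax hτ _ hi
  · filter_upwards [self_mem_nhdsWithin] with τ hτ
    exact smax_le_sup'_add hτ hs _

lemma sigmoid_tendsto_atTop : Filter.Tendsto _root_.sigmoid Filter.atTop (nhds 1) := by
  unfold _root_.sigmoid
  have h : Filter.Tendsto (fun z : ℝ => 1 + Real.exp (-z)) Filter.atTop (nhds 1) := by
    simpa using tendsto_const_nhds.add Real.tendsto_exp_neg_atTop_nhds_zero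
  have h1 : Filter.Tendsto (fun _ : ℝ => (1:ℝ)) Filter.atTop (nhds 1) := tendsto_const_nhds
  have h2 : Filter.Tendsto (fun z : ℝ => 1 / (1 + Real.exp (-z))) Filter.atTop (nhds (1/1)) :=
    h1.div h one_ne_zero
  simpa using h2

lemma sigmoid_tendsto_atBot : Filter.Tendsto _root_.sigmoid Filter.atBot (nhds 0) := by
  unfold _root_.sigmoid
  have h : Filter.Tendsto (fun z : ℝ => 1 + Real.exp (-z)) Filter.atBot Filter.atTop := by
    apply Filter.tendsto_atTop_add_const_left
    exact Real.tendsto_exp_atTop.comp tendsto_neg_atBot_atTop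
  have := h.inv_tendsto_atTop
  simpa [one_div, Pi.inv_def] using this

open scoped Classical in
/-- limit of the soft edge as `τ → 0⁺`. -/
noncomputable def limEdge {n : ℕ} (P : Matrix (Fin n) (Fin n) ℝ) (a b : Fin n) : ℝ :=
  if a = b then 1/2 else if beats P a b then 1 else 0

lemma limEdge_nonneg {n : ℕ} (P : Matrix (Fin n) (Fin n) ℝ) (a b : Fin n) :
    0 ≤ limEdge P a b := by
  unfold limEdge; split_ifs <;> norm_num

lemma limEdge_le_one {n : ℕ} (P : Matrix (Fin n) (Fin n) ℝ) (a b : Fin n) :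
    limEdge P a b ≤ 1 := by
  unfold limEdge; split_ifs <;> norm_num

lemma limEdge_self {n : ℕ} (P : Matrix (Fin n) (Fin n) ℝ) (a : Fin n) :
    limEdge P a a = 1/2 := by simp [limEdge]

lemma limEdge_of_beats {n : ℕ} {P : Matrix (Fin n) (Fin n) ℝ} {a b : Fin n}
    (hab : a ≠ b) (h : beats P a b) : limEdge P a b = 1 := by
  simp [limEdge, hab, h]

lemma limEdge_of_not_beats {n : ℕ} {P : Matrix (Fin n) (Fin n) ℝ} {a b : Fin n}
    (hab : a ≠ b) (h : ¬ beats P a b) : limEdge P a b = 0 := by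
  simp [limEdge, hab, h]

lemma tendsto_softEdge {n : ℕ} {P : Matrix (Fin n) (Fin n) ℝ} {δ : ℝ} (hδ : 0 < δ)
    (hP : IsProbTournament P) (hmargin : HasMargin P δ) (a b : Fin n) :
    Filter.Tendsto (fun τ => softEdge P τ a b) (nhdsWithin 0 (Set.Ioi 0))
      (nhds (limEdge P a b)) := by
  rcases eq_or_ne a b with rfl | hab
  · have hPaa : P a a - 1/2 = 0 := by rw [hP.2.2 a]; ring
    have : (fun τ : ℝ => softEdge P τ a a) = fun _ => (1/2 : ℝ) := by
      funext τ
      unfold softEdge _root_.sigmoid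
      rw [hPaa, zero_div, neg_zero, Real.exp_zero]
      norm_num
    rw [this, limEdge_self]
    exact tendsto_const_nhds
  · by_cases hb : beats P a b
    · have hx : 0 < P a b - 1/2 := by
        have := hb; unfold beats at this; linarith
      have h1 : Filter.Tendsto (fun τ : ℝ => (P a b - 1/2) / τ)
          (nhdsWithin 0 (Set.Ioi 0)) Filter.atTop := by
        simp only [div_eq_mul_inv]
        exact Filter.Tendsto.const_mul_atTop hx tendsto_inv_nhdsGT_zero
      have := sigmoid_tendsto_atTop.comp h1
      rw [limEdge_of_beats hab hb]
      simpa [softEdge, Function.comp_def] using this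
    · have hx : P a b - 1/2 < 0 := by
        have hm := hmargin a b hab
        have hle : P a b ≤ 1/2 := le_of_not_gt hb
        have : |P a b - 1/2| = -(P a b - 1/2) := abs_of_nonpos (by linarith)
        rw [this] at hm
        linarith
      have h1 : Filter.Tendsto (fun τ : ℝ => (P a b - 1/2) / τ)
          (nhdsWithin 0 (Set.Ioi 0)) Filter.atBot := by
        simp only [div_eq_mul_inv]
        exact (Filter.tendsto_const_mul_atBot_of_neg hx).mpr tendsto_inv_nhdsGT_zero
      have := sigmoid_tendsto_atBot.comp h1
      rw [limEdge_of_not_beats hab hb]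
      simpa [softEdge, Function.comp_def] using this

end Aux

/-- Uncovered Set consistency of the soft Uncovered-Set score. -/
theorem uncovered_set_consistency {n : ℕ} (hn : 2 ≤ n) (P : Matrix (Fin n) (Fin n) ℝ)
    (δ : ℝ) (hδ : 0 < δ) (hP : IsProbTournament P) (hmargin : HasMargin P δ)
    (a : Fin n) :
    ∃ L : ℝ,
      Tendsto (fun τ : ℝ => ucScore P τ a) (𝓝[>] (0:ℝ)) (𝓝 L) ∧
      (inUncovered P a → L = 1) ∧
      (¬ inUncovered P a → L ≤ 0) ∧
      (∀ᶠ τ : ℝ in 𝓝[>] (0:ℝ), (1/2 < ucScore P τ a ↔ inUncovered P a)) := by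
  haveI : Nontrivial (Fin n) := Fin.nontrivial_iff_two_le.mpr hn
  obtain ⟨b0, hb0⟩ := exists_ne a
  have hneC : (({a}ᶜ : Finset (Fin n))).Nonempty := ⟨b0, by simpa using hb0⟩
  have hneU : (Finset.univ : Finset (Fin n)).Nonempty := Finset.univ_nonempty
  set E := limEdge P with hE
  set cl : Fin n → ℝ := fun c =>
    E c a * (1 - Finset.univ.sup' hneU (fun b => E a b - E c b)) with hcl
  have hcov : ∀ c, Tendsto (fun τ => coverScore P τ c a) (𝓝[>] (0:ℝ)) (𝓝 (cl c)) := by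
    intro c
    have hs : Tendsto
        (fun τ => smax τ (Finset.univ : Finset (Fin n))
          (fun b => softEdge P τ a b - softEdge P τ c b))
        (𝓝[>] (0:ℝ)) (𝓝 (Finset.univ.sup' hneU (fun b => E a b - E c b))) :=
      tendsto_smax hneU (fun b _ =>
        (tendsto_softEdge hδ hP hmargin a b).sub (tendsto_softEdge hδ hP hmargin c b))
    exact (tendsto_softEdge hδ hP hmargin c a).mul (tendsto_const_nhds.sub hs)
  set S := (({a}ᶜ : Finset (Fin n))).sup' hneC cl with hS
  have hmain : Tendsto (fun τ : ℝ => ucScore P τ a) (𝓝[>] (0:ℝ)) (𝓝 (1 - S)) := by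
    unfold ucScore
    exact tendsto_const_nhds.sub (tendsto_smax hneC (fun c _ => hcov c))
  have hirr : ∀ c, ¬ beats P c c := by
    intro c h
    unfold beats at h
    rw [hP.2.2] at h
    exact lt_irrefl _ h
  have hasym : ∀ c d, beats P c d → ¬ beats P d c := by
    intro c d h1 h2
    unfold beats at h1 h2
    have := hP.2.1 c d
    linarith
  have hcl_not_cov : ∀ c, c ≠ a → ¬ covers P c a → cl c = 0 := by
    intro c hca hnc
    by_cases hb : beats P c a
    · have hex : ∃ b, beats P a b ∧ ¬ beats P c b := by
        by_contra hcon
        push_neg at hcon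
        exact hnc ⟨hb, hcon⟩
      obtain ⟨b, hab, hcb⟩ := hex
      have hba : b ≠ a := by intro h; rw [h] at hab; exact hirr a hab
      have hbc : b ≠ c := by intro h; rw [h] at hab; exact hasym c a hb hab
      have hterm : E a b - E c b = 1 := by
        rw [hE, limEdge_of_beats hba.symm hab, limEdge_of_not_beats hbc.symm hcb]
        ring
      have hMle : Finset.univ.sup' hneU (fun b => E a b - E c b) ≤ 1 := by
        apply Finset.sup'_le
        intro d _
        have h1 := limEdge_le_one P a d
        have h2 := limEdge_nonneg P c d
        rw [hE]; linarith
      have hMge : (1:ℝ) ≤ Finset.univ.sup' hneU (fun b => E a b - E c b) := by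
        calc (1:ℝ) = E a b - E c b := hterm.symm
          _ ≤ _ := by exact Finset.le_sup' (fun b => E a b - E c b) (Finset.mem_univ b)
      rw [hcl]
      simp only
      rw [le_antisymm hMle hMge]
      ring
    · rw [hcl]
      simp only
      rw [hE, limEdge_of_not_beats hca hb]
      ring
  have hcl_cov : ∀ c, covers P c a → (1:ℝ) ≤ cl c := by
    intro c hc
    obtain ⟨hca, hall⟩ := hc
    have hcna : c ≠ a := by intro h; rw [h] at hca; exact hirr a hca
    have hM : Finset.univ.sup' hneU (fun b => E a b - E c b) ≤ 0 := by
      apply Finset.sup'_le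
      intro b _
      rcases eq_or_ne b a with rfl | hba
      · rw [hE, limEdge_self, limEdge_of_beats hcna hca]
        norm_num
      · rcases eq_or_ne b c with rfl | hbc
        · have hnab : ¬ beats P a b := hasym b a hca
          rw [hE, limEdge_self, limEdge_of_not_beats hcna.symm hnab]
          norm_num
        · by_cases hab : beats P a b
          · rw [hE, limEdge_of_beats hba.symm hab, limEdge_of_beats hbc.symm (hall b hab)]
            norm_num
          · rw [hE, limEdge_of_not_beats hba.symm hab]
            have := limEdge_nonneg P c b
            linarith
    rw [hcl]
    simp only
    rw [hE, limEdge_of_beats hcna hca]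
    nlinarith
  have hS_unc : inUncovered P a → S = 0 := by
    intro hu
    apply le_antisymm
    · apply Finset.sup'_le
      intro c hc
      have hca : c ≠ a := by simpa using hc
      rw [hcl_not_cov c hca (hu c hca)]
    · have h1 : cl b0 ≤ S := Finset.le_sup' cl (by simpa using hb0)
      rw [hcl_not_cov b0 hb0 (hu b0 hb0)] at h1
      exact h1
  have hS_cov : ¬ inUncovered P a → (1:ℝ) ≤ S := by
    intro hnu
    unfold inUncovered at hnu
    push_neg at hnu
    obtain ⟨c, hca, hcv⟩ := hnu
    calc (1:ℝ) ≤ cl c := hcl_cov c hcv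
      _ ≤ S := Finset.le_sup' cl (by simpa using hca)
  refine ⟨1 - S, hmain, ?_, ?_, ?_⟩
  · intro hu
    rw [hS_unc hu]
    ring
  · intro hnu
    have := hS_cov hnu
    linarith
  · by_cases hu : inUncovered P a
    · have hS0 := hS_unc hu
      have hev : ∀ᶠ τ : ℝ in 𝓝[>] (0:ℝ), (1:ℝ)/2 < ucScore P τ a :=
        hmain.eventually_const_lt (by rw [hS0]; norm_num)
      filter_upwards [hev] with τ hτ
      exact iff_of_true hτ hu
    · have hS1 := hS_cov hu
      have hev : ∀ᶠ τ : ℝ in 𝓝[>] (0:ℝ), ucScore P τ a < 1/2 :=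
        hmain.eventually_lt_const (by linarith)
      filter_upwards [hev] with τ hτ
      exact iff_of_false (by linarith) hu
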